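/- For even n, there exist two bipartite graphs G1 and G2 on offline vertices {u_1,…,u_n} and online vertices {v_1,…,v_n}, both admitting perfect matchings and agreeing on the neighborhoods of the first n/2 online vertices (each v_j for j ≤ n/2 is adjacent to exactly u_j and u_{j+n/2}), such that: in G1 vertex v_j for j > n/2 is adjacent only to u_{j−n/2}, while in G2 vertex v_j for j > n/2 is adjacent only to u_j. Any matching of the first n/2 online vertices that permits a perfect completion in G1 permits at most n/2 total matches if the true graph is G2, and vice versa. Hence no deterministic online algorithm (with any advice) can guarantee a perfect matching on the correct graph while guaranteeing strictly more than n/2 matches on the other. -/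

import Mathlib

/-- A partial assignment `μ` of online vertices (indexed by `Fin n`) to offline vertices
is a matching respecting the neighborhoods `N` if every assigned offline vertex is a
neighbor, and no offline vertex is used twice. -/
def RespectsMatching (n : ℕ) (N : Fin n → Set (Fin n)) (μ : Fin n → Option (Fin n)) : Prop :=
  (∀ j u, μ j = some u → u ∈ N j) ∧
  (∀ j j' u, μ j = some u → μ j' = some u → j = j')

/-- Number of matched online vertices. -/
def matchSize (n : ℕ) (μ : Fin n → Option (Fin n)) : ℕ :=
  (Finset.univ.filter fun j => (μ j).isSome).card

/-- Neighborhoods in the gadget graph `G1`: `v_j` for `j < n/2` is adjacent to `u_j` and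
`u_{j + n/2}`; `v_j` for `j ≥ n/2` is adjacent only to `u_{j - n/2}`. -/
def gadgetN1 (n : ℕ) : Fin n → Set (Fin n) := fun j =>
  if (j : ℕ) < n / 2 then {u | (u : ℕ) = (j : ℕ) ∨ (u : ℕ) = (j : ℕ) + n / 2}
  else {u | (u : ℕ) = (j : ℕ) - n / 2}

/-- Neighborhoods in the gadget graph `G2`: same first half as `G1`, but `v_j` for
`j ≥ n/2` is adjacent only to `u_j`. -/
def gadgetN2 (n : ℕ) : Fin n → Set (Fin n) := fun j =>
  if (j : ℕ) < n / 2 then {u | (u : ℕ) = (j : ℕ) ∨ (u : ℕ) = (j : ℕ) + n / 2}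
  else {u | u = j}

/-- Hardness gadget: both `G1` and `G2` admit perfect matchings and agree on the first
`n/2` online vertices, yet any prefix decisions compatible with a perfect matching in one
graph yield at most `n/2` total matches in the other. Hence no (deterministic) online
algorithm, with any advice, can be 1-consistent and guarantee strictly more than `n/2`
matches on the wrong graph. -/
lemma half_card_bound (n r : ℕ) (μ : Fin n → Option (Fin n))
    (h : ∀ j : Fin n, (μ j).isSome → (j : ℕ) < r) : matchSize n μ ≤ r := by
  show (Finset.univ.filter fun j => (μ j).isSome).card ≤ r
  calc (Finset.univ.filter fun j => (μ j).isSome).card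
      ≤ (Finset.range r).card := by
        refine Finset.card_le_card_of_injOn (fun j => (j : ℕ)) ?_ ?_
        · intro j hj
          simp only [Finset.mem_coe, Finset.mem_filter] at hj
          exact Finset.mem_range.mpr (h j hj.2)
        · intro a _ b _ hab
          exact Fin.ext hab
    _ = r := Finset.card_range r

theorem hardness_gadget (n : ℕ) (hn : Even n) (hpos : 0 < n) :
    (∃ μ, RespectsMatching n (gadgetN1 n) μ ∧ ∀ j, (μ j).isSome) ∧
    (∃ μ, RespectsMatching n (gadgetN2 n) μ ∧ ∀ j, (μ j).isSome) ∧
    (∀ μ₁ μ₂, RespectsMatching n (gadgetN1 n) μ₁ → (∀ j, (μ₁ j).isSome) →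
      RespectsMatching n (gadgetN2 n) μ₂ →
      (∀ j : Fin n, (j : ℕ) < n / 2 → μ₂ j = μ₁ j) →
      matchSize n μ₂ ≤ n / 2) ∧
    (∀ μ₂ μ₁, RespectsMatching n (gadgetN2 n) μ₂ → (∀ j, (μ₂ j).isSome) →
      RespectsMatching n (gadgetN1 n) μ₁ →
      (∀ j : Fin n, (j : ℕ) < n / 2 → μ₁ j = μ₂ j) →
      matchSize n μ₁ ≤ n / 2) := by
  obtain ⟨r, hr⟩ := hn
  have hr2 : n / 2 = r := by omega
  have hrpos : 0 < r := by omega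
  refine ⟨?_, ?_, ?_, ?_⟩
  · -- perfect matching in G1
    refine ⟨fun j => if h : (j : ℕ) < r then some ⟨(j : ℕ) + r, by omega⟩
        else some ⟨(j : ℕ) - r, by have := j.isLt; omega⟩, ⟨?_, ?_⟩, ?_⟩
    · intro j u hju
      simp only [gadgetN1, hr2, Set.mem_setOf_eq]
      by_cases h : (j : ℕ) < r
      · simp only [h, dif_pos, if_pos, Option.some.injEq] at hju ⊢
        subst hju; right; rfl
      · simp only [h, dif_neg, if_neg, Option.some.injEq, not_false_iff] at hju ⊢
        subst hju; rfl
    · intro j j' u hj hj'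
      have hjl := j.isLt
      have hjl' := j'.isLt
      by_cases h : (j : ℕ) < r <;> by_cases h' : (j' : ℕ) < r <;>
        simp only [h, h', dif_pos, dif_neg, Option.some.injEq, not_false_iff] at hj hj' <;>
        (try subst hj) <;>
        first
        | (apply Fin.ext; have := congrArg Fin.val hj'; simp at this; omega)
        | (exfalso; have := congrArg Fin.val hj'; simp at this; omega)
    · intro j
      by_cases h : (j : ℕ) < r <;> simp [h]
  · -- perfect matching in G2
    refine ⟨fun j => some j, ⟨?_, ?_⟩, fun j => rfl⟩
    · intro j u hju
      simp only [Option.some.injEq] at hju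
      subst hju
      simp only [gadgetN2, hr2, Set.mem_setOf_eq]
      by_cases h : (j : ℕ) < r <;> simp [h]
    · intro j j' u hj hj'
      simp only [Option.some.injEq] at hj hj'
      subst hj; exact hj'.symm
  · -- claim 3
    intro μ₁ μ₂ h1 h1s h2 hagree
    obtain ⟨h1m, h1i⟩ := h1
    obtain ⟨h2m, h2i⟩ := h2
    rw [hr2] at hagree
    have stepA : ∀ j : Fin n, ¬ (j : ℕ) < r → ∀ u, μ₁ j = some u → (u : ℕ) = (j : ℕ) - r := by
      intro j hj u hu
      have hm := h1m j u hu
      simpa only [gadgetN1, hr2, if_neg hj, Set.mem_setOf_eq] using hm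
    have stepB : ∀ j : Fin n, (j : ℕ) < r → ∀ u, μ₁ j = some u → (u : ℕ) = (j : ℕ) + r := by
      intro j hj u hu
      have hm := h1m j u hu
      simp only [gadgetN1, hr2, if_pos hj, Set.mem_setOf_eq] at hm
      rcases hm with hm | hm
      · exfalso
        have hjn : (j : ℕ) + r < n := by omega
        set j1 : Fin n := ⟨(j : ℕ) + r, hjn⟩ with hj1
        have hj1r : ¬ (j1 : ℕ) < r := by simp [hj1]
        obtain ⟨w, hw⟩ := Option.isSome_iff_exists.mp (h1s j1)
        have hwval := stepA j1 hj1r w hw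
        have hw2 : μ₁ j1 = some u := by
          rw [hw]; congr 1; apply Fin.ext; rw [hwval, hm]; simp [hj1]
        have heq := h1i j j1 u hu hw2
        have := congrArg Fin.val heq
        simp [hj1] at this
        omega
      · exact hm
    have hnone : ∀ j : Fin n, ¬ (j : ℕ) < r → μ₂ j = none := by
      intro j hj
      by_contra hne
      obtain ⟨u, hu⟩ := Option.ne_none_iff_exists'.mp hne
      have hm := h2m j u hu
      simp only [gadgetN2, hr2, if_neg hj, Set.mem_setOf_eq] at hm
      rw [hm] at hu
      have hjn : (j : ℕ) < n := j.isLt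
      have hlt : (j : ℕ) - r < n := by omega
      set j0 : Fin n := ⟨(j : ℕ) - r, hlt⟩ with hj0
      have hj0r : (j0 : ℕ) < r := by simp [hj0]; omega
      obtain ⟨w, hw⟩ := Option.isSome_iff_exists.mp (h1s j0)
      have hwval := stepB j0 hj0r w hw
      have hw2 : μ₂ j0 = some j := by
        rw [hagree j0 hj0r, hw]; congr 1; apply Fin.ext; rw [hwval]; simp [hj0]; omega
      have heq := h2i j j0 j hu hw2
      have := congrArg Fin.val heq
      simp [hj0] at this; omega
    refine le_of_le_of_eq (half_card_bound n r μ₂ ?_) hr2.symm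
    intro j hj
    by_contra h
    rw [hnone j h] at hj
    simp at hj
  · -- claim 4
    intro μ₂ μ₁ h2 h2s h1 hagree
    obtain ⟨h2m, h2i⟩ := h2
    obtain ⟨h1m, h1i⟩ := h1
    rw [hr2] at hagree
    have stepA : ∀ j : Fin n, ¬ (j : ℕ) < r → μ₂ j = some j := by
      intro j hj
      obtain ⟨u, hu⟩ := Option.isSome_iff_exists.mp (h2s j)
      have hm := h2m j u hu
      simp only [gadgetN2, hr2, if_neg hj, Set.mem_setOf_eq] at hm
      rw [hu, hm]
    have stepB : ∀ j : Fin n, (j : ℕ) < r → ∀ u, μ₂ j = some u → (u : ℕ) = (j : ℕ) := by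
      intro j hj u hu
      have hm := h2m j u hu
      simp only [gadgetN2, hr2, if_pos hj, Set.mem_setOf_eq] at hm
      rcases hm with hm | hm
      · exact hm
      · exfalso
        have hjn : (j : ℕ) + r < n := by omega
        set j1 : Fin n := ⟨(j : ℕ) + r, hjn⟩ with hj1
        have hj1r : ¬ (j1 : ℕ) < r := by simp [hj1]
        have hw2 : μ₂ j1 = some u := by
          rw [stepA j1 hj1r]; congr 1; apply Fin.ext; simp [hj1, hm]
        have heq := h2i j j1 u hu hw2
        have := congrArg Fin.val heq
        simp [hj1] at this
        omega
    have hnone : ∀ j : Fin n, ¬ (j : ℕ) < r → μ₁ j = none := by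
      intro j hj
      by_contra hne
      obtain ⟨u, hu⟩ := Option.ne_none_iff_exists'.mp hne
      have hm := h1m j u hu
      simp only [gadgetN1, hr2, if_neg hj, Set.mem_setOf_eq] at hm
      have hjn : (j : ℕ) < n := j.isLt
      have hlt : (j : ℕ) - r < n := by omega
      set j0 : Fin n := ⟨(j : ℕ) - r, hlt⟩ with hj0
      have hj0r : (j0 : ℕ) < r := by simp [hj0]; omega
      obtain ⟨w, hw⟩ := Option.isSome_iff_exists.mp (h2s j0)
      have hwval := stepB j0 hj0r w hw
      have hw2 : μ₁ j0 = some u := by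
        rw [hagree j0 hj0r, hw]; congr 1; apply Fin.ext; rw [hwval, hm]
      have heq := h1i j j0 u hu hw2
      have := congrArg Fin.val heq
      simp [hj0] at this; omega
    refine le_of_le_of_eq (half_card_bound n r μ₁ ?_) hr2.symm
    intro j hj
    by_contra h
    rw [hnone j h] at hj
    simp at hj
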